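/- Let P1 be a SPARQL graph pattern and P2 a BGP. Then for every RDF graph G, ⟦FNE(P1,P2)⟧_G = {μ ∈ ⟦P1⟧_G | there is no μ' ∈ ⟦P2⟧_G with μ ∼ μ'}. -/

import Mathlib

/-!
Formalization of SPARQL graph-pattern syntax and semantics, following
Pérez et al. and the paper "SPARQL in N3".

* IRIs, blank nodes and literals are three pairwise disjoint infinite sets,
  packaged in the type `RTerm` (the set `T = I ∪ B ∪ L`).
* Variables form a further disjoint infinite set `Var`.
* A pattern term (`PTerm`) is an element of `T ∪ V`.
* A solution mapping is a partial function from variables to RDF terms,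
  modeled as `Var → Option RTerm`.
-/

namespace SparqlN3

/-- RDF terms: IRIs, blank nodes, literals — three disjoint infinite sets. -/
inductive RTerm : Type
  | iri : ℕ → RTerm
  | bnode : ℕ → RTerm
  | lit : ℕ → RTerm
deriving DecidableEq

/-- Variables (an infinite set, disjoint from `RTerm` by typing). -/
abbrev Var : Type := ℕ

/-- Elements of `T ∪ V`. -/
abbrev PTerm : Type := RTerm ⊕ Var

/-- Triple patterns: elements of `(T ∪ V) × (T ∪ V) × (T ∪ V)`. -/
abbrev TriplePat : Type := PTerm × PTerm × PTerm

/-- Ground RDF triples. -/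
abbrev Triple : Type := RTerm × RTerm × RTerm

/-- An RDF graph: a set of triples. -/
abbrev Graph : Type := Set Triple

/-- A basic graph pattern: a finite set of triple patterns. -/
abbrev BGP : Type := Finset TriplePat

/-- A (partial) mapping from variables to RDF terms. -/
abbrev Mapping : Type := Var → Option RTerm

/-- The domain of a mapping. -/
def mdom (μ : Mapping) : Set Var := {x | μ x ≠ none}

/-- A solution mapping has a finite domain. -/
def FiniteDom (μ : Mapping) : Prop := (mdom μ).Finite

/-- Compatibility of two mappings: they agree on the common domain. -/
def compat (μ₁ μ₂ : Mapping) : Prop :=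
  ∀ x a b, μ₁ x = some a → μ₂ x = some b → a = b

/-- Union `μ₁ ∪ μ₂` of two (compatible) mappings. -/
def munion (μ₁ μ₂ : Mapping) : Mapping :=
  fun x => (μ₁ x).elim (μ₂ x) some

def varsPT : PTerm → Finset Var
  | .inl _ => ∅
  | .inr v => {v}

/-- Variables of a triple pattern. -/
def varsTP (t : TriplePat) : Finset Var :=
  varsPT t.1 ∪ varsPT t.2.1 ∪ varsPT t.2.2

/-- Variables of a BGP. -/
def varsBGP (P : BGP) : Finset Var := P.biUnion varsTP

/-- Substitution on a pattern term: replace variables in the domain of `μ`. -/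
def substPT (μ : Mapping) : PTerm → PTerm
  | .inl t => .inl t
  | .inr v => (μ v).elim (.inr v) .inl

/-- Substitution `tμ` on a triple pattern (componentwise). -/
def substTP (μ : Mapping) (t : TriplePat) : TriplePat :=
  (substPT μ t.1, substPT μ t.2.1, substPT μ t.2.2)

/-- Substitution `Pμ` on a BGP (literal replacement of variables in `dom μ`). -/
def substBGP (μ : Mapping) (P : BGP) : BGP := P.image (substTP μ)

/-- View a ground triple as a triple pattern. -/
def toPat (t : Triple) : TriplePat := (.inl t.1, .inl t.2.1, .inl t.2.2)

/-- `InstIn G μ P` : the instantiation `Pμ` is contained in `G`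
(every triple pattern of `P` becomes, under `μ`, a ground triple of `G`). -/
def InstIn (G : Graph) (μ : Mapping) (P : BGP) : Prop :=
  ∀ tp ∈ P, ∃ t ∈ G, substTP μ tp = toPat t

/-- Evaluation of a BGP: `⟦P⟧_G = {μ | dom(μ) = var(P) ∧ Pμ ⊆ G}`. -/
def bgpEval (G : Graph) (P : BGP) : Set Mapping :=
  {μ | mdom μ = ↑(varsBGP P) ∧ InstIn G μ P}

/-- SPARQL graph patterns.  Filter conditions are modeled as predicates
on solution mappings. -/
inductive GP : Type
  | bgp : BGP → GP
  | and : GP → GP → GP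
  | union : GP → GP → GP
  | minus : GP → GP → GP
  | fe : GP → GP → GP
  | fne : GP → GP → GP
  | filter : GP → (Mapping → Prop) → GP
  | opt : GP → GP → (Mapping → Prop) → GP

/-- Substitution `Pμ` on a graph pattern, applied componentwise to triple
patterns and recursively through the constructors; for filters, the
predicate is composed with `μ`. -/
def substGP (μ : Mapping) : GP → GP
  | .bgp P => .bgp (substBGP μ P)
  | .and P₁ P₂ => .and (substGP μ P₁) (substGP μ P₂)
  | .union P₁ P₂ => .union (substGP μ P₁) (substGP μ P₂)
  | .minus P₁ P₂ => .minus (substGP μ P₁) (substGP μ P₂)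
  | .fe P₁ P₂ => .fe (substGP μ P₁) (substGP μ P₂)
  | .fne P₁ P₂ => .fne (substGP μ P₁) (substGP μ P₂)
  | .filter P R => .filter (substGP μ P) (fun ν => R (munion μ ν))
  | .opt P₁ P₂ R => .opt (substGP μ P₁) (substGP μ P₂) (fun ν => R (munion μ ν))

/-- Structural depth (used as termination measure for `eval`). -/
def depth : GP → ℕ
  | .bgp _ => 0
  | .and P₁ P₂ => max (depth P₁) (depth P₂) + 1
  | .union P₁ P₂ => max (depth P₁) (depth P₂) + 1
  | .minus P₁ P₂ => max (depth P₁) (depth P₂) + 1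
  | .fe P₁ P₂ => max (depth P₁) (depth P₂) + 1
  | .fne P₁ P₂ => max (depth P₁) (depth P₂) + 1
  | .filter P _ => depth P + 1
  | .opt P₁ P₂ _ => max (depth P₁) (depth P₂) + 1

theorem depth_substGP (μ : Mapping) (P : GP) : depth (substGP μ P) = depth P := by
  induction P <;> simp [substGP, depth, *]

/-- The scope `sv` of a graph pattern. -/
def sv : GP → Finset Var
  | .bgp P => varsBGP P
  | .and P₁ P₂ => sv P₁ ∪ sv P₂
  | .union P₁ P₂ => sv P₁ ∪ sv P₂
  | .minus P₁ _ => sv P₁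
  | .fe P₁ _ => sv P₁
  | .fne P₁ _ => sv P₁
  | .filter P _ => sv P
  | .opt P₁ P₂ _ => sv P₁ ∪ sv P₂

/-- The variables `var(P)` occurring in a graph pattern. -/
def varsGP : GP → Finset Var
  | .bgp P => varsBGP P
  | .and P₁ P₂ => varsGP P₁ ∪ varsGP P₂
  | .union P₁ P₂ => varsGP P₁ ∪ varsGP P₂
  | .minus P₁ P₂ => varsGP P₁ ∪ varsGP P₂
  | .fe P₁ P₂ => varsGP P₁ ∪ varsGP P₂
  | .fne P₁ P₂ => varsGP P₁ ∪ varsGP P₂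
  | .filter P _ => varsGP P
  | .opt P₁ P₂ _ => varsGP P₁ ∪ varsGP P₂

/-- Evaluation `⟦P⟧_G` of SPARQL graph patterns over an RDF graph `G`. -/
def eval (G : Graph) : GP → Set Mapping
  | .bgp P => bgpEval G P
  | .and P₁ P₂ =>
      {μ | ∃ μ₁ ∈ eval G P₁, ∃ μ₂ ∈ eval G P₂, compat μ₁ μ₂ ∧ μ = munion μ₁ μ₂}
  | .union P₁ P₂ => eval G P₁ ∪ eval G P₂
  | .minus P₁ P₂ =>
      {μ ∈ eval G P₁ | ∀ μ' ∈ eval G P₂, ¬ compat μ μ' ∨ mdom μ ∩ mdom μ' = ∅}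
  | .fe P₁ P₂ =>
      {μ ∈ eval G P₁ | (eval G (substGP μ P₂)).Nonempty}
  | .fne P₁ P₂ =>
      {μ ∈ eval G P₁ | eval G (substGP μ P₂) = ∅}
  | .filter P R => {μ ∈ eval G P | R μ}
  | .opt P₁ P₂ R =>
      {μ | ∃ μ₁ ∈ eval G P₁, ∃ μ₂ ∈ eval G P₂,
          compat μ₁ μ₂ ∧ R (munion μ₁ μ₂) ∧ μ = munion μ₁ μ₂}
        ∪ {μ₁ ∈ eval G P₁ | ¬ ∃ μ₂ ∈ eval G P₂, compat μ₁ μ₂ ∧ R (munion μ₁ μ₂)}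
termination_by P => depth P
decreasing_by all_goals (simp [depth_substGP, depth]; try omega)

/-- A pattern contains no UNION and no OPT subpattern. -/
def NoUnionOpt : GP → Prop
  | .bgp _ => True
  | .and P₁ P₂ => NoUnionOpt P₁ ∧ NoUnionOpt P₂
  | .union _ _ => False
  | .minus P₁ P₂ => NoUnionOpt P₁ ∧ NoUnionOpt P₂
  | .fe P₁ P₂ => NoUnionOpt P₁ ∧ NoUnionOpt P₂
  | .fne P₁ P₂ => NoUnionOpt P₁ ∧ NoUnionOpt P₂
  | .filter P _ => NoUnionOpt P
  | .opt _ _ _ => False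

/-- Renaming of variables in a pattern term. -/
def renamePT (σ : Var → Var) : PTerm → PTerm
  | .inl t => .inl t
  | .inr v => .inr (σ v)

/-- Renaming of variables in a triple pattern. -/
def renameTP (σ : Var → Var) (t : TriplePat) : TriplePat :=
  (renamePT σ t.1, renamePT σ t.2.1, renamePT σ t.2.2)

/-- Renaming `Qσ` of variables in a BGP. -/
def renameBGP (σ : Var → Var) (P : BGP) : BGP := P.image (renameTP σ)

/-- Restriction of a mapping to a set of variables. -/
def restrict (μ : Mapping) (S : Finset Var) : Mapping :=
  fun x => if x ∈ S then μ x else none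


lemma mem_varsPT_subst (μ : Mapping) (p : PTerm) (x : Var) :
    x ∈ varsPT (substPT μ p) ↔ x ∈ varsPT p ∧ μ x = none := by
  cases p with
  | inl t => simp [substPT, varsPT]
  | inr v =>
    cases h : μ v with
    | none =>
      simp only [substPT, h, Option.elim, varsPT, Finset.mem_singleton]
      constructor
      · rintro rfl; exact ⟨rfl, h⟩
      · rintro ⟨rfl, _⟩; rfl
    | some a =>
      simp only [substPT, h, Option.elim, varsPT, Finset.notMem_empty, false_iff,
        Finset.mem_singleton, not_and]
      rintro rfl h'; simp [h] at h'

lemma mem_varsTP_subst (μ : Mapping) (t : TriplePat) (x : Var) :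
    x ∈ varsTP (substTP μ t) ↔ x ∈ varsTP t ∧ μ x = none := by
  simp only [varsTP, substTP, Finset.mem_union, mem_varsPT_subst]
  tauto

lemma mem_varsBGP_subst (μ : Mapping) (P : BGP) (x : Var) :
    x ∈ varsBGP (substBGP μ P) ↔ x ∈ varsBGP P ∧ μ x = none := by
  simp only [varsBGP, substBGP, Finset.mem_biUnion, Finset.mem_image]
  constructor
  · rintro ⟨tp', ⟨tp, htp, rfl⟩, hx⟩
    rw [mem_varsTP_subst] at hx
    exact ⟨⟨tp, htp, hx.1⟩, hx.2⟩
  · rintro ⟨⟨tp, htp, hx⟩, hnone⟩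
    exact ⟨substTP μ tp, ⟨tp, htp, rfl⟩, (mem_varsTP_subst μ tp x).2 ⟨hx, hnone⟩⟩

lemma substPT_subst (μ ν : Mapping) (p : PTerm) :
    substPT ν (substPT μ p) = substPT (munion μ ν) p := by
  cases p with
  | inl t => rfl
  | inr v => cases h : μ v <;> simp [substPT, munion, h, Option.elim]

lemma substTP_subst (μ ν : Mapping) (t : TriplePat) :
    substTP ν (substTP μ t) = substTP (munion μ ν) t := by
  simp [substTP, substPT_subst]

lemma substPT_congr {μ₁ μ₂ : Mapping} (p : PTerm)
    (h : ∀ x ∈ varsPT p, μ₁ x = μ₂ x) : substPT μ₁ p = substPT μ₂ p := by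
  cases p with
  | inl t => rfl
  | inr v => simp [substPT, h v (by simp [varsPT])]

lemma substTP_congr {μ₁ μ₂ : Mapping} (t : TriplePat)
    (h : ∀ x ∈ varsTP t, μ₁ x = μ₂ x) : substTP μ₁ t = substTP μ₂ t := by
  simp only [substTP]
  refine congrArg₂ _ (substPT_congr _ fun x hx => h x ?_)
    (congrArg₂ _ (substPT_congr _ fun x hx => h x ?_)
      (substPT_congr _ fun x hx => h x ?_)) <;>
    simp [varsTP, Finset.mem_union, hx]

/-- Key lemma: `⟦P₂μ⟧_G` is nonempty iff there is a solution of `P₂`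
compatible with `μ`. -/
lemma bgpEval_subst_nonempty_iff (G : Graph) (μ : Mapping) (P₂ : BGP) :
    (bgpEval G (substBGP μ P₂)).Nonempty ↔ ∃ μ' ∈ bgpEval G P₂, compat μ μ' := by
  constructor
  · rintro ⟨ν, hdom, hinst⟩
    refine ⟨restrict (munion μ ν) (varsBGP P₂), ⟨?_, ?_⟩, ?_⟩
    · ext x
      simp only [mdom, restrict, Set.mem_setOf_eq, Finset.coe_mem, Finset.mem_coe]
      constructor
      · intro hx
        by_contra hxm
        simp [hxm] at hx
      · intro hx
        simp only [hx, if_true]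
        cases h : μ x with
        | some a => simp [munion, h]
        | none =>
          have hxν : x ∈ mdom ν := by
            rw [hdom]
            exact_mod_cast (mem_varsBGP_subst μ P₂ x).2 ⟨hx, h⟩
          simpa [munion, h, mdom] using hxν
    · intro tp htp
      obtain ⟨t, htG, ht⟩ := hinst (substTP μ tp) (Finset.mem_image_of_mem _ htp)
      refine ⟨t, htG, ?_⟩
      rw [substTP_subst] at ht
      rw [← ht]
      refine substTP_congr tp fun x hx => ?_
      have hxP : x ∈ varsBGP P₂ := Finset.mem_biUnion.2 ⟨tp, htp, hx⟩
      simp [restrict, hxP]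
    · intro x a b h1 h2
      simp only [restrict] at h2
      by_cases hx : x ∈ varsBGP P₂
      · simp only [hx, if_true, munion, h1, Option.elim] at h2
        exact Option.some.inj h2
      · simp [hx] at h2
  · rintro ⟨μ', ⟨hdom, hinst⟩, hcompat⟩
    refine ⟨restrict μ' (varsBGP (substBGP μ P₂)), ?_, ?_⟩
    · ext x
      simp only [mdom, restrict, Set.mem_setOf_eq, Finset.mem_coe]
      constructor
      · intro hx
        by_contra hxm
        simp [hxm] at hx
      · intro hx
        have hx' := (mem_varsBGP_subst μ P₂ x).1 hx
        have : x ∈ mdom μ' := by rw [hdom]; exact_mod_cast hx'.1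
        simpa [hx, mdom] using this
    · intro tp' htp'
      obtain ⟨tp, htp, rfl⟩ := Finset.mem_image.1 htp'
      obtain ⟨t, htG, ht⟩ := hinst tp htp
      refine ⟨t, htG, ?_⟩
      rw [substTP_subst, ← ht]
      refine substTP_congr tp fun x hx => ?_
      have hxP : x ∈ varsBGP P₂ := Finset.mem_biUnion.2 ⟨tp, htp, hx⟩
      cases h : μ x with
      | some a =>
        have hx' : x ∈ mdom μ' := by rw [hdom]; exact_mod_cast hxP
        simp only [mdom, Set.mem_setOf_eq] at hx'
        obtain ⟨b, hb⟩ := Option.ne_none_iff_exists'.1 hx'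
        have := hcompat x a b h hb
        simp [munion, h, hb, this]
      | none =>
        have hxs : x ∈ varsBGP (substBGP μ P₂) :=
          (mem_varsBGP_subst μ P₂ x).2 ⟨hxP, h⟩
        simp [munion, h, restrict, hxs]

/-- For a graph pattern `P₁` and a BGP `P₂`,
`⟦FNE(P₁,P₂)⟧_G = {μ ∈ ⟦P₁⟧_G | ¬∃ μ' ∈ ⟦P₂⟧_G, μ ∼ μ'}`. -/
theorem fne_eval_eq (P₁ : GP) (P₂ : BGP) (G : Graph) :
    eval G (.fne P₁ (.bgp P₂)) =
      {μ ∈ eval G P₁ | ¬ ∃ μ' ∈ bgpEval G P₂, compat μ μ'} := by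
  ext μ
  simp only [eval, substGP, Set.mem_setOf_eq, ← bgpEval_subst_nonempty_iff,
    Set.not_nonempty_iff_eq_empty]

end SparqlN3
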